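/- Let N ≥ 1, p > 1, q > 2p/(p+1), M > 0, and suppose u is a positive radial function on [0,∞) solving −u'' − ((N−1)/r)u' = u^p + M|u'|^q with u(0) = 1, u decreasing, u(r) → 0 as r → ∞, and satisfying both sup_r |u'(r)| ≤ c₁·M^(−(p+1)/((p+1)q−2p)) and sup_r r^((p+1)/(p−1))|u'(r)| ≤ c₂ for constants c₁, c₂ depending only on N, p, q. Then 1 ≤ (c₁ + ((p−1)/2)c₂)·M^(−2/((p+1)q−2p)). In particular no such solution exists once M > ((c₁ + ((p−1)/2)c₂))^(((p+1)q−2p)/2). -/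

import Mathlib

/-- quantitative nonexistence of radial ground states with u(0) = 1
for large M when q > 2p/(p+1) (Theorem 5.3). -/
theorem stmt15 (N p q M c₁ c₂ : ℝ) (hN : 1 ≤ N) (hp : 1 < p)
    (hq : 2 * p / (p + 1) < q) (hM : 0 < M) (hc₁ : 0 < c₁) (hc₂ : 0 < c₂)
    (u u' u'' : ℝ → ℝ)
    (hu : ∀ r : ℝ, 0 ≤ r → HasDerivAt u (u' r) r)
    (hu' : ∀ r : ℝ, 0 < r → HasDerivAt u' (u'' r) r)
    (hode : ∀ r : ℝ, 0 < r →
      -(u'' r) - (N - 1) / r * u' r = u r ^ p + M * |u' r| ^ q)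
    (hpos : ∀ r : ℝ, 0 ≤ r → 0 < u r)
    (h0 : u 0 = 1)
    (hdec : StrictAntiOn u (Set.Ici 0))
    (hlim : Filter.Tendsto u Filter.atTop (nhds 0))
    (hb1 : ∀ r : ℝ, 0 ≤ r → |u' r| ≤ c₁ * M ^ (-((p + 1) / ((p + 1) * q - 2 * p))))
    (hb2 : ∀ r : ℝ, 0 < r → r ^ ((p + 1) / (p - 1)) * |u' r| ≤ c₂) :
    1 ≤ (c₁ + (p - 1) / 2 * c₂) * M ^ (-(2 / ((p + 1) * q - 2 * p))) ∧
    ((c₁ + (p - 1) / 2 * c₂) ^ (((p + 1) * q - 2 * p) / 2) < M → False) := by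
  have hp1 : (0:ℝ) < p - 1 := by linarith
  have hp1' : (0:ℝ) < p + 1 := by linarith
  set D : ℝ := (p + 1) * q - 2 * p with hDdef
  have hD : 0 < D := by
    have := (div_lt_iff₀ hp1').mp hq
    simp only [hDdef]; nlinarith
  set a : ℝ := 2 / (p - 1) with hadef
  have ha : 0 < a := div_pos two_pos hp1
  set C : ℝ := (p - 1) / 2 * c₂ with hCdef
  have hC : 0 < C := mul_pos (div_pos hp1 two_pos) hc₂
  set R : ℝ := M ^ ((p - 1) / D) with hRdef
  have hR : 0 < R := Real.rpow_pos_of_pos hM _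
  -- Step A : u 0 - u R ≤ c₁ * M ^ (-(p+1)/D) * R
  set K : ℝ := c₁ * M ^ (-((p + 1) / D)) with hKdef
  have stepA : u 0 - u R ≤ K * R := by
    have key := Convex.norm_image_sub_le_of_norm_hasDerivWithin_le
      (f := u) (f' := u') (s := Set.Icc 0 R) (C := K)
      (fun x hx => (hu x hx.1).hasDerivWithinAt)
      (fun x hx => by simpa using hb1 x hx.1)
      (convex_Icc 0 R) (Set.left_mem_Icc.2 hR.le) (Set.right_mem_Icc.2 hR.le)
    have : |u R - u 0| ≤ K * R := by
      simpa [Real.norm_eq_abs, abs_of_nonneg hR.le] using key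
    calc u 0 - u R ≤ |u R - u 0| := by rw [abs_sub_comm]; exact le_abs_self _
      _ ≤ K * R := this
  -- Step B : u R ≤ C * R ^ (-a)
  have hb2' : ∀ x : ℝ, 0 < x → -(c₂ * x ^ (-((p + 1) / (p - 1)))) ≤ u' x := by
    intro x hx
    have hxb : (0:ℝ) < x ^ ((p + 1) / (p - 1)) := Real.rpow_pos_of_pos hx _
    have h1 : |u' x| ≤ c₂ * x ^ (-((p + 1) / (p - 1))) := by
      rw [Real.rpow_neg hx.le, ← div_eq_mul_inv, le_div_iff₀ hxb]
      calc |u' x| * x ^ ((p + 1) / (p - 1)) = x ^ ((p + 1) / (p - 1)) * |u' x| := by ring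
        _ ≤ c₂ := hb2 x hx
    linarith [neg_abs_le (u' x), h1]
  set φ : ℝ → ℝ := fun r => u r - C * r ^ (-a) with hφdef
  have hexp : -a - 1 = -((p + 1) / (p - 1)) := by
    field_simp [hadef]
    have hap : a * (p - 1) = 2 := by rw [hadef]; exact div_mul_cancel₀ _ hp1.ne'
    linear_combination -hap
  have hφderiv : ∀ x : ℝ, 0 < x →
      HasDerivAt φ (u' x + c₂ * x ^ (-((p + 1) / (p - 1)))) x := by
    intro x hx
    have h1 : HasDerivAt (fun r : ℝ => C * r ^ (-a)) (C * ((-a) * x ^ (-a - 1))) x :=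
      (Real.hasDerivAt_rpow_const (Or.inl hx.ne')).const_mul C
    have h2 := (hu x hx.le).sub h1
    have heq : u' x - C * ((-a) * x ^ (-a - 1)) = u' x + c₂ * x ^ (-((p + 1) / (p - 1))) := by
      rw [hexp]
      have hCa : C * a = c₂ := by rw [hCdef, hadef]; field_simp
      rw [← hCa]; ring
    rwa [heq] at h2
  have hmono : MonotoneOn φ (Set.Ici R) := by
    apply monotoneOn_of_deriv_nonneg (convex_Ici R)
    · intro x hx
      exact (hφderiv x (lt_of_lt_of_le hR hx)).continuousAt.continuousWithinAt
    · intro x hx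
      rw [interior_Ici] at hx
      exact (hφderiv x (hR.trans hx)).differentiableAt.differentiableWithinAt
    · intro x hx
      rw [interior_Ici] at hx
      rw [(hφderiv x (hR.trans hx)).deriv]
      have := hb2' x (hR.trans hx)
      linarith
  have hφlim : Filter.Tendsto φ Filter.atTop (nhds 0) := by
    have h1 : Filter.Tendsto (fun r : ℝ => C * r ^ (-a)) Filter.atTop (nhds (C * 0)) :=
      (tendsto_rpow_neg_atTop ha).const_mul C
    have := hlim.sub h1
    simpa using this
  have stepB : u R ≤ C * R ^ (-a) := by
    have hφR : φ R ≤ 0 := by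
      apply ge_of_tendsto hφlim
      filter_upwards [Filter.eventually_ge_atTop R] with r hr
      exact hmono (Set.self_mem_Ici) hr hr
    simpa [hφdef, sub_nonpos] using hφR
  -- combine
  have hKR : K * R = c₁ * M ^ (-(2 / D)) := by
    rw [hKdef, hRdef, mul_assoc, ← Real.rpow_add hM]
    congr 1
    field_simp
    ring
  have hRa : R ^ (-a) = M ^ (-(2 / D)) := by
    rw [hRdef, ← Real.rpow_mul hM.le]
    congr 1
    rw [hadef]
    field_simp
  have main : 1 ≤ (c₁ + C) * M ^ (-(2 / D)) := by
    have h1 : (1:ℝ) = (u 0 - u R) + u R := by rw [h0]; ring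
    have h2 : (1:ℝ) ≤ K * R + C * R ^ (-a) := by
      rw [h1]; exact add_le_add stepA stepB
    rw [hKR, hRa] at h2
    linarith [h2]
  refine ⟨main, fun hM2 => ?_⟩
  set E : ℝ := c₁ + C with hEdef
  have hE : 0 < E := by positivity
  have hMD : (0:ℝ) < M ^ (2 / D) := Real.rpow_pos_of_pos hM _
  have hlt : E < M ^ (2 / D) := by
    have h1 : (E ^ (D / 2)) ^ (2 / D) < M ^ (2 / D) :=
      Real.rpow_lt_rpow (Real.rpow_nonneg hE.le _) hM2 (div_pos two_pos hD)
    have hone : D / 2 * (2 / D) = 1 := by field_simp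
    rwa [← Real.rpow_mul hE.le, hone, Real.rpow_one] at h1
  have hinv : M ^ (-(2 / D)) = (M ^ (2 / D))⁻¹ := by
    rw [← Real.rpow_neg hM.le]
  have : E * M ^ (-(2 / D)) < 1 := by
    rw [hinv]
    calc E * (M ^ (2 / D))⁻¹ < M ^ (2 / D) * (M ^ (2 / D))⁻¹ := by
          apply mul_lt_mul_of_pos_right hlt (by positivity)
      _ = 1 := mul_inv_cancel₀ hMD.ne'
  linarith [main]
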